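/- Let N ≥ 1, m > 1, σ > -2, p > m. Suppose f: (0,∞) → (0,∞) is a C² solution of the profile ODE (f^m)'' + ((N-1)/ξ)(f^m)' + αf + βξf' + ξ^σ f^p = 0 with α = (σ+2)/(σ(m-1)+2(p-1)), β = (p-m)/(σ(m-1)+2(p-1)). Define X(ξ) = (α/m)ξ² f(ξ)^{1-m}, Y(ξ) = ξ f'(ξ)/f(ξ), Z(ξ) = (1/m)ξ^{σ+2} f(ξ)^{p-m}, and let η = log ξ. Then (X,Y,Z) as functions of η satisfy dX/dη = X(2-(m-1)Y), dY/dη = -X-(N-2)Y-Z-mY²-((p-m)/(σ+2))XY, dZ/dη = Z(σ+2+(p-m)Y). -/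

import Mathlib

open Real Set

set_option maxHeartbeats 1000000 in
theorem phase_space_change_of_variables (N : ℕ) (hN : 1 ≤ N) (m σ p α β : ℝ)
    (hm : 1 < m) (hσ : -2 < σ) (hp : p > m)
    (hα : α = (σ + 2) / (σ * (m - 1) + 2 * (p - 1)))
    (hβ : β = (p - m) / (σ * (m - 1) + 2 * (p - 1)))
    (f : ℝ → ℝ) (hreg : ContDiffOn ℝ 2 f (Ioi 0)) (hpos : ∀ ξ ∈ Ioi (0 : ℝ), 0 < f ξ)
    (hode : ∀ ξ ∈ Ioi (0 : ℝ),
      deriv (deriv (fun s => f s ^ m)) ξ + (((N : ℝ) - 1) / ξ) * deriv (fun s => f s ^ m) ξ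
        + α * f ξ + β * ξ * deriv f ξ + ξ ^ σ * f ξ ^ p = 0)
    (X Y Z : ℝ → ℝ)
    (hX : X = fun ξ => (α / m) * ξ ^ 2 * f ξ ^ (1 - m))
    (hY : Y = fun ξ => ξ * deriv f ξ / f ξ)
    (hZ : Z = fun ξ => (1 / m) * ξ ^ (σ + 2) * f ξ ^ (p - m)) :
    ∀ η : ℝ,
      HasDerivAt (fun t => X (Real.exp t))
        (X (Real.exp η) * (2 - (m - 1) * Y (Real.exp η))) η ∧
      HasDerivAt (fun t => Y (Real.exp t))
        (-X (Real.exp η) - ((N : ℝ) - 2) * Y (Real.exp η) - Z (Real.exp η)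
          - m * Y (Real.exp η) ^ 2
          - ((p - m) / (σ + 2)) * X (Real.exp η) * Y (Real.exp η)) η ∧
      HasDerivAt (fun t => Z (Real.exp t))
        (Z (Real.exp η) * (σ + 2 + (p - m) * Y (Real.exp η))) η := by
  subst hX hY hZ hα hβ
  have hd0 : σ * (m - 1) + 2 * (p - 1) > 0 := by nlinarith
  have hd0' : σ * (m - 1) + 2 * (p - 1) ≠ 0 := ne_of_gt hd0
  have hσ2 : σ + 2 ≠ 0 := by linarith
  have hm0 : m ≠ 0 := by positivity
  have hd1 : ∀ x ∈ Ioi (0:ℝ), HasDerivAt f (deriv f x) x := fun x hx =>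
    ((hreg.contDiffAt (isOpen_Ioi.mem_nhds hx)).differentiableAt (by norm_num)).hasDerivAt
  have hcd : ContDiffOn ℝ 1 (deriv f) (Ioi 0) := hreg.deriv_of_isOpen isOpen_Ioi (by norm_num)
  have hd2 : ∀ x ∈ Ioi (0:ℝ), HasDerivAt (deriv f) (deriv (deriv f) x) x := fun x hx =>
    ((hcd.contDiffAt (isOpen_Ioi.mem_nhds hx)).differentiableAt (by norm_num)).hasDerivAt
  have hgm : ∀ x ∈ Ioi (0:ℝ), HasDerivAt (fun s => f s ^ m)
      (deriv f x * m * f x ^ (m - 1)) x := fun x hx =>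
    (hd1 x hx).rpow_const (Or.inl (hpos x hx).ne')
  intro η
  have hξmem : Real.exp η ∈ Ioi (0:ℝ) := Real.exp_pos η
  set ξ := Real.exp η with hξdef
  have hξ : 0 < ξ := Real.exp_pos η
  have hF : 0 < f ξ := hpos ξ hξmem
  have hf1 : HasDerivAt f (deriv f ξ) ξ := hd1 ξ hξmem
  have hf2 : HasDerivAt (deriv f) (deriv (deriv f) ξ) ξ := hd2 ξ hξmem
  -- rpow identities
  have ha0 : f ξ ^ (m - 1) ≠ 0 := (Real.rpow_pos_of_pos hF _).ne'
  have e1 : f ξ ^ (m - 1 - 1) = f ξ ^ (m - 1) / f ξ := by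
    rw [Real.rpow_sub hF, Real.rpow_one]
  have e2 : f ξ ^ (1 - m) = 1 / f ξ ^ (m - 1) := by
    rw [show (1 - m) = -(m - 1) by ring, Real.rpow_neg hF.le, one_div]
  have e3 : f ξ ^ (1 - m - 1) = 1 / (f ξ ^ (m - 1) * f ξ) := by
    rw [show (1 - m - 1) = -((m - 1) + 1) by ring, Real.rpow_neg hF.le, Real.rpow_add hF,
      Real.rpow_one, one_div]
  have e4 : f ξ ^ (p - m - 1) = f ξ ^ (p - m) / f ξ := by
    rw [show p - m - 1 = (p - m) - 1 by ring, Real.rpow_sub hF, Real.rpow_one]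
  have e5 : f ξ ^ p = f ξ ^ (m - 1) * (f ξ ^ (p - m) * f ξ) := by
    conv_lhs => rw [show p = (m - 1) + ((p - m) + 1) by ring, Real.rpow_add hF,
      Real.rpow_add hF, Real.rpow_one]
  have x1 : ξ ^ (σ + 2) = ξ ^ σ * ξ ^ 2 := by
    rw [Real.rpow_add hξ, show (2:ℝ) = ((2:ℕ):ℝ) by norm_num, Real.rpow_natCast]
  have x2 : ξ ^ (σ + 2 - 1) = ξ ^ σ * ξ := by
    rw [show σ + 2 - 1 = σ + 1 by ring, Real.rpow_add hξ, Real.rpow_one]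
  -- second derivative of f^m and the ODE at ξ
  have hev : deriv (fun s => f s ^ m) =ᶠ[nhds ξ] fun x => deriv f x * m * f x ^ (m - 1) :=
    Filter.eventuallyEq_of_mem (isOpen_Ioi.mem_nhds hξmem) (fun x hx => (hgm x hx).deriv)
  have h2nd : HasDerivAt (deriv (fun s => f s ^ m))
      ((deriv (deriv f) ξ * m) * f ξ ^ (m - 1)
        + (deriv f ξ * m) * (deriv f ξ * (m - 1) * f ξ ^ (m - 1 - 1))) ξ := by
    have h := (hf2.mul_const m).mul (hf1.rpow_const (p := m - 1) (Or.inl hF.ne'))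
    exact h.congr_of_eventuallyEq hev
  have hode' := hode ξ hξmem
  rw [h2nd.deriv, (hgm ξ hξmem).deriv, e1, e5] at hode'
  refine ⟨?_, ?_, ?_⟩
  · -- X equation
    have hXd : HasDerivAt (fun s => (σ + 2) / (σ * (m - 1) + 2 * (p - 1)) / m * s ^ 2 * f s ^ (1 - m))
        (((σ + 2) / (σ * (m - 1) + 2 * (p - 1)) / m * (↑2 * ξ ^ (2 - 1))) * f ξ ^ (1 - m)
          + ((σ + 2) / (σ * (m - 1) + 2 * (p - 1)) / m * ξ ^ 2)
            * (deriv f ξ * (1 - m) * f ξ ^ (1 - m - 1))) ξ :=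
      ((hasDerivAt_pow 2 ξ).const_mul _).mul (hf1.rpow_const (Or.inl hF.ne'))
    have hc := hXd.comp η (Real.hasDerivAt_exp η)
    simp only [Function.comp_def] at hc
    refine hc.congr_deriv ?_
    symm
    beta_reduce
    rw [e2, e3]
    generalize f ξ ^ (m - 1) = a at ha0 ⊢
    field_simp
    ring
  · -- Y equation
    have hYd : HasDerivAt (fun s => s * deriv f s / f s)
        (((1 * deriv f ξ + ξ * deriv (deriv f) ξ) * f ξ - ξ * deriv f ξ * deriv f ξ) / f ξ ^ 2) ξ :=
      ((hasDerivAt_id' ξ).mul hf2).div hf1 hF.ne'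
    have hc := hYd.comp η (Real.hasDerivAt_exp η)
    simp only [Function.comp_def] at hc
    refine hc.congr_deriv ?_
    symm
    beta_reduce
    rw [e2, x1]
    generalize f ξ ^ (m - 1) = a at ha0 hode' ⊢
    generalize f ξ ^ (p - m) = b at hode' ⊢
    generalize ξ ^ σ = s at hode' ⊢
    have hma : m * a ≠ 0 := mul_ne_zero hm0 ha0
    have hFpp : deriv (deriv f) ξ =
        -(deriv f ξ * m * (deriv f ξ * (m - 1) * (a / f ξ))
          + ((N : ℝ) - 1) / ξ * (deriv f ξ * m * a)
          + (σ + 2) / (σ * (m - 1) + 2 * (p - 1)) * f ξ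
          + (p - m) / (σ * (m - 1) + 2 * (p - 1)) * ξ * deriv f ξ
          + s * (a * (b * f ξ))) / (m * a) := by
      rw [eq_div_iff hma]
      linear_combination hode'
    rw [hFpp]
    field_simp
    ring
  · -- Z equation
    have hZd : HasDerivAt (fun s => 1 / m * s ^ (σ + 2) * f s ^ (p - m))
        ((1 / m * ((σ + 2) * ξ ^ (σ + 2 - 1))) * f ξ ^ (p - m)
          + (1 / m * ξ ^ (σ + 2)) * (deriv f ξ * (p - m) * f ξ ^ (p - m - 1))) ξ :=
      ((Real.hasDerivAt_rpow_const (Or.inl hξ.ne')).const_mul _).mul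
        (hf1.rpow_const (Or.inl hF.ne'))
    have hc := hZd.comp η (Real.hasDerivAt_exp η)
    simp only [Function.comp_def] at hc
    refine hc.congr_deriv ?_
    symm
    beta_reduce
    rw [e4, x1, x2, ← hξdef]
    clear_value ξ
    generalize f ξ ^ (p - m) = b
    generalize ξ ^ σ = s
    field_simp
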